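/- Let M be a finite free ℤ_d-module with a symplectic form φ, and let L ⊆ M be a free isotropic submodule. Then every ℤ_d-basis (e₁,…,e_k) of L can be extended to a symplectic basis (e₁,…,e_n,f₁,…,f_n) of M. -/

import Mathlib

set_option linter.unusedSectionVars false
set_option maxHeartbeats 1600000

section SymplecticHelpers

variable {d : ℕ} [NeZero d] {M : Type} [AddCommGroup M] [Module (ZMod d) M] [Finite M]



lemma skew_of_alt (φ : M →ₗ[ZMod d] M →ₗ[ZMod d] ZMod d)
    (halt : ∀ m : M, φ m m = 0) (x y : M) : φ x y = - φ y x := by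
  have h := halt (x + y)
  simp only [map_add, LinearMap.add_apply, halt] at h
  linear_combination h

/-- A proper submodule (ideal) of `ZMod d` is killed by a nonzero scalar. -/
lemma exists_ann_of_ne_top (I : Submodule (ZMod d) (ZMod d)) (hI : I ≠ ⊤) :
    ∃ t : ZMod d, t ≠ 0 ∧ ∀ y ∈ I, t * y = 0 := by
  have hfin : Nat.card I ∣ d := by
    simpa [Nat.card_zmod] using AddSubgroup.card_addSubgroup_dvd_card I.toAddSubgroup
  have hpos : 0 < Nat.card I := Nat.card_pos
  refine ⟨(Nat.card I : ZMod d), ?_, ?_⟩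
  · rw [Ne, ZMod.natCast_eq_zero_iff]
    intro hdvd
    have : Nat.card I = d := Nat.dvd_antisymm hfin hdvd
    apply hI
    have : I.toAddSubgroup = ⊤ := by
      apply AddSubgroup.eq_top_of_card_eq
      simpa [Nat.card_zmod] using this
    ext x
    simp [← Submodule.mem_toAddSubgroup, this]
  · intro y hy
    have := card_nsmul_eq_zero' (G := I) (x := ⟨y, hy⟩)
    have hco : (Nat.card I) • y = 0 := congrArg Subtype.val this
    rw [← nsmul_eq_mul]
    exact hco

lemma exists_dual (φ : M →ₗ[ZMod d] M →ₗ[ZMod d] ZMod d)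
    (hsymp : ∀ m₀ : M, (∀ m : M, φ m₀ m = 0) → m₀ = 0)
    (e : M) (he : ∀ t : ZMod d, t • e = 0 → t = 0) :
    ∃ f : M, φ e f = 1 := by
  have htop : LinearMap.range (φ e) = ⊤ := by
    by_contra h
    obtain ⟨t, ht0, ht⟩ := exists_ann_of_ne_top _ h
    apply ht0
    apply he
    apply hsymp
    intro m
    have : φ (t • e) m = t * φ e m := by simp
    rw [this, ht _ ⟨m, rfl⟩]
  obtain ⟨f, hf⟩ := (Submodule.eq_top_iff'.mp htop) 1
  exact ⟨f, hf⟩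



/-- `pM` as a submodule. -/
noncomputable def pMul (d : ℕ) [NeZero d] (M : Type) [AddCommGroup M] [Module (ZMod d) M] (p : ℕ) :
    Submodule (ZMod d) M :=
  LinearMap.range ((p : ZMod d) • (LinearMap.id : M →ₗ[ZMod d] M))

lemma mem_pMul {p : ℕ} {y : M} : y ∈ pMul d M p ↔ ∃ m : M, (p : ZMod d) • m = y := by
  simp [pMul]

lemma exists_notin_pMul (N : Submodule (ZMod d) M) (π : M →ₗ[ZMod d] M)
    (hran : ∀ m, π m ∈ N) (hid : ∀ y ∈ N, π y = y) (p : ℕ) (hp : p.Prime)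
    (hpd : p ∣ Nat.card N) :
    ∃ y ∈ N, y ∉ pMul d M p := by
  by_contra hcon
  push_neg at hcon
  have hsurj : Function.Surjective (fun y : N => (⟨(p : ZMod d) • (y : M), N.smul_mem _ y.2⟩ : N)) := by
    intro y
    obtain ⟨m, hm⟩ := mem_pMul.mp (hcon (y : M) y.2)
    refine ⟨⟨π m, hran m⟩, ?_⟩
    apply Subtype.ext
    show (p : ZMod d) • π m = (y : M)
    rw [← map_smul, hm]
    exact hid _ y.2
  have hinj : Function.Injective (fun y : N => (⟨(p : ZMod d) • (y : M), N.smul_mem _ y.2⟩ : N)) :=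
    (Finite.injective_iff_surjective).mpr hsurj
  haveI : Fintype N := Fintype.ofFinite _
  haveI := Fact.mk hp
  obtain ⟨y₀, hy₀⟩ := exists_prime_addOrderOf_dvd_card (G := N) p
    (by rwa [← Nat.card_eq_fintype_card])
  have h1 : p • y₀ = 0 := by
    rw [← hy₀]; exact addOrderOf_nsmul_eq_zero y₀
  have h2 : (⟨(p : ZMod d) • (y₀ : M), N.smul_mem _ y₀.2⟩ : N) = 0 := by
    apply Subtype.ext
    show (p : ZMod d) • (y₀ : M) = 0
    rw [Nat.cast_smul_eq_nsmul]
    exact_mod_cast congrArg Subtype.val h1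
  have h3 : (⟨(p : ZMod d) • ((0 : N) : M), N.smul_mem _ (0 : N).2⟩ : N) = 0 := by
    apply Subtype.ext; simp
  have := hinj (h2.trans h3.symm)
  rw [this] at hy₀
  simp [addOrderOf_zero] at hy₀
  exact hp.one_lt.ne' hy₀.symm

lemma nsmul_eq_mod_nsmul' {G : Type*} [AddCommGroup G] (z : G) (p : ℕ) (hz : p • z = 0) (n : ℕ) :
    n • z = (n % p) • z := by
  conv_lhs => rw [← Nat.div_add_mod n p, add_nsmul, mul_nsmul, hz, smul_zero, zero_add]

lemma exists_eps (p : ℕ) (hp : p ∈ d.primeFactors) :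
    ∃ ε : ℕ, ε % p = 1 ∧ ∀ q ∈ d.primeFactors, q ≠ p → q ∣ ε := by
  have hpp : p.Prime := Nat.prime_of_mem_primeFactors hp
  set c := ∏ q ∈ d.primeFactors.erase p, q with hc
  have hco : Nat.Coprime c p := by
    apply Nat.Coprime.prod_left
    intro q hq
    have hqp : q.Prime := Nat.prime_of_mem_primeFactors (Finset.mem_of_mem_erase hq)
    exact (Nat.coprime_primes hqp hpp).mpr (Finset.ne_of_mem_erase hq)
  obtain ⟨u, -, hu⟩ := Nat.exists_mul_mod_eq_one_of_coprime hco hpp.one_lt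
  refine ⟨c * u, by simpa using hu, ?_⟩
  intro q hq hqp
  exact dvd_mul_of_dvd_left (Finset.dvd_prod_of_mem _ (Finset.mem_erase.mpr ⟨hqp, hq⟩)) u



lemma exists_avoiding (N : Submodule (ZMod d) M) (π : M →ₗ[ZMod d] M)
    (hran : ∀ m, π m ∈ N) (hid : ∀ y ∈ N, π y = y)
    (hcard : ∀ p : ℕ, p.Prime → p ∣ d → p ∣ Nat.card N) :
    ∃ x ∈ N, ∀ p ∈ d.primeFactors, x ∉ pMul d M p := by
  classical
  have h : ∀ p : d.primeFactors, ∃ y ∈ N, y ∉ pMul d M (p : ℕ) := fun p =>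
    exists_notin_pMul N π hran hid p (Nat.prime_of_mem_primeFactors p.2)
      (hcard p (Nat.prime_of_mem_primeFactors p.2) (Nat.dvd_of_mem_primeFactors p.2))
  choose y hyN hyp using h
  have heps : ∀ p : d.primeFactors, ∃ ε : ℕ, ε % (p : ℕ) = 1 ∧
      ∀ q ∈ d.primeFactors, q ≠ (p : ℕ) → q ∣ ε := fun p => exists_eps p p.2
  choose ε hε1 hε2 using heps
  refine ⟨∑ p : d.primeFactors, ε p • y p, ?_, ?_⟩
  · exact Submodule.sum_mem _ fun p _ => nsmul_mem (hyN p) _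
  · intro p hp hmem
    set P : Submodule (ZMod d) M := pMul d M p
    have hp0 : 0 < p := (Nat.prime_of_mem_primeFactors hp).pos
    have hz : ∀ z : M ⧸ P, p • z = 0 := by
      intro z
      obtain ⟨m, rfl⟩ := Submodule.Quotient.mk_surjective P z
      have : p • Submodule.Quotient.mk (p := P) m = Submodule.Quotient.mk ((p : ZMod d) • m) := by
        rw [← Nat.cast_smul_eq_nsmul (ZMod d)]
        rfl
      rw [this, Submodule.Quotient.mk_eq_zero]
      exact mem_pMul.mpr ⟨m, rfl⟩
    have hmk : P.mkQ (∑ q : d.primeFactors, ε q • y q) = P.mkQ (y ⟨p, hp⟩) := by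
      rw [map_sum]
      rw [Finset.sum_eq_single_of_mem (⟨p, hp⟩ : d.primeFactors) (Finset.mem_univ _)]
      · rw [map_nsmul, nsmul_eq_mod_nsmul' _ p (hz _), hε1 ⟨p, hp⟩, one_nsmul]
      · intro q _ hq
        have hqp : p ∣ ε q := hε2 q p hp (fun h => hq (Subtype.ext h.symm))
        have hmod : ε q % p = 0 := by obtain ⟨t, ht⟩ := hqp; simp [ht, Nat.mul_mod_right]
        rw [map_nsmul, nsmul_eq_mod_nsmul' _ p (hz _), hmod, zero_nsmul]
    have : y ⟨p, hp⟩ ∈ P := by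
      rw [← Submodule.Quotient.mk_eq_zero, ← Submodule.mkQ_apply, ← hmk, Submodule.mkQ_apply,
        Submodule.Quotient.mk_eq_zero]
      exact hmem
    exact hyp ⟨p, hp⟩ this



/-- A proper ideal of `ZMod d` is killed by `(m : ZMod d)` for a proper divisor `m` of `d`. -/
lemma exists_ann_of_ne_top' (I : Submodule (ZMod d) (ZMod d)) (hI : I ≠ ⊤) :
    ∃ m : ℕ, 0 < m ∧ m ∣ d ∧ m ≠ d ∧ ∀ y ∈ I, (m : ZMod d) * y = 0 := by
  have hfin : Nat.card I ∣ d := by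
    simpa [Nat.card_zmod] using AddSubgroup.card_addSubgroup_dvd_card I.toAddSubgroup
  refine ⟨Nat.card I, Nat.card_pos, hfin, ?_, ?_⟩
  · intro hcd
    apply hI
    have htop : I.toAddSubgroup = ⊤ := by
      apply AddSubgroup.eq_top_of_card_eq
      simpa [Nat.card_zmod] using hcd
    ext x
    simp [← Submodule.mem_toAddSubgroup, htop]
  · intro y hy
    have := card_nsmul_eq_zero' (G := I) (x := ⟨y, hy⟩)
    have hco : (Nat.card I) • y = 0 := congrArg Subtype.val this
    rw [← nsmul_eq_mul]
    exact hco

/-- If `(m : ZMod d) * y = 0` with `m ∣ d`, then `y` is a multiple of `d / m`. -/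
lemma eq_mul_of_ann {m : ℕ} (hm : 0 < m) (hmd : m ∣ d) {y : ZMod d}
    (h : (m : ZMod d) * y = 0) : ∃ z : ZMod d, y = ((d / m : ℕ) : ZMod d) * z := by
  have hy : ((m * y.val : ℕ) : ZMod d) = 0 := by
    push_cast
    rw [ZMod.natCast_zmod_val]
    exact h
  rw [ZMod.natCast_eq_zero_iff] at hy
  have hd : d = m * (d / m) := (Nat.mul_div_cancel' hmd).symm
  have hy2 : m * (d / m) ∣ m * y.val := by rwa [Nat.mul_div_cancel' hmd]
  have : (d / m) ∣ y.val := (mul_dvd_mul_iff_left (by omega : m ≠ 0)).mp hy2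
  obtain ⟨t, ht⟩ := this
  refine ⟨(t : ZMod d), ?_⟩
  conv_lhs => rw [← ZMod.natCast_zmod_val y]
  rw [ht]
  push_cast
  ring

lemma exists_functional {ι : Type} [Fintype ι] (g : Module.Basis ι (ZMod d) M) (x : M)
    (hx : ∀ p ∈ d.primeFactors, x ∉ pMul d M p) :
    ∃ ψ : M →ₗ[ZMod d] ZMod d, ψ x = 1 := by
  classical
  set a : ι → ZMod d := fun i => g.repr x i with ha
  by_cases h1 : (1 : ZMod d) ∈ Submodule.span (ZMod d) (Set.range a)
  · rw [Submodule.mem_span_range_iff_exists_fun] at h1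
    obtain ⟨c, hc⟩ := h1
    refine ⟨∑ i, c i • g.coord i, ?_⟩
    rw [LinearMap.sum_apply]
    simpa [Module.Basis.coord_apply, smul_eq_mul] using hc
  · exfalso
    obtain ⟨m, hm0, hmd, hmne, hann⟩ := exists_ann_of_ne_top'
      (Submodule.span (ZMod d) (Set.range a))
      (fun htop => h1 (htop ▸ Submodule.mem_top))
    have hd : d = m * (d / m) := (Nat.mul_div_cancel' hmd).symm
    have hdpos : 0 < d := NeZero.pos d
    have hdm1 : 1 < d / m := by
      rcases Nat.lt_or_ge (d / m) 2 with h | h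
      · interval_cases h' : (d / m) <;> omega
      · exact h
    set p := (d / m).minFac with hpdef
    have hp : p.Prime := Nat.minFac_prime (by omega)
    have hpdm : p ∣ d / m := Nat.minFac_dvd _
    have hpmem : p ∈ d.primeFactors :=
      Nat.mem_primeFactors.mpr ⟨hp, hpdm.trans (Nat.div_dvd_of_dvd hmd), by omega⟩
    have hz : ∀ i : ι, ∃ z : ZMod d, a i = ((d / m : ℕ) : ZMod d) * z := by
      intro i
      exact eq_mul_of_ann hm0 hmd
        (hann _ (Submodule.subset_span (Set.mem_range_self i)))
    choose z hzz using hz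
    have hcast : ((d / m : ℕ) : ZMod d) = (p : ZMod d) * ((d / m / p : ℕ) : ZMod d) := by
      conv_lhs => rw [← Nat.mul_div_cancel' hpdm]
      push_cast
      ring
    apply hx p hpmem
    rw [mem_pMul]
    refine ⟨∑ i, (((d / m / p : ℕ) : ZMod d) * z i) • g i, ?_⟩
    rw [Finset.smul_sum]
    conv_rhs => rw [← Module.Basis.sum_repr g x]
    apply Finset.sum_congr rfl
    intro i _
    have hai : (g.repr x) i = a i := rfl
    rw [smul_smul, hai, hzz i, hcast]
    ring_nf



/-- Key freeness lemma: a direct summand of a finite free `ZMod d`-module, of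
cardinality `d ^ s`, is free of rank `s`. -/
lemma basis_of_summand (hd : 1 < d) {ι : Type} [Fintype ι] (g : Module.Basis ι (ZMod d) M) :
    ∀ (s : ℕ) (N : Submodule (ZMod d) M) (π : M →ₗ[ZMod d] M),
      (∀ m, π m ∈ N) → (∀ y ∈ N, π y = y) → Nat.card N = d ^ s →
      Nonempty (Module.Basis (Fin s) (ZMod d) N) := by
  intro s
  induction s with
  | zero =>
    intro N π hran hid hcard
    have : Subsingleton N := by
      rw [pow_zero] at hcard
      exact Nat.card_eq_one_iff_unique.mp hcard |>.1
    exact ⟨Module.Basis.empty N⟩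
  | succ s ih =>
    intro N π hran hid hcard
    obtain ⟨x, hxN, hx⟩ := exists_avoiding N π hran hid
      (fun p hp hpd => hcard ▸ hpd.trans (dvd_pow_self d (Nat.succ_ne_zero s)))
    obtain ⟨ψ, hψ⟩ := exists_functional g x hx
    set N₁ : Submodule (ZMod d) M := N ⊓ LinearMap.ker ψ with hN₁
    have memN₁ : ∀ z : M, z ∈ N₁ ↔ z ∈ N ∧ ψ z = 0 := by
      intro z
      rw [hN₁, Submodule.mem_inf, LinearMap.mem_ker]
    set π₁ : M →ₗ[ZMod d] M := π - ((ψ.comp π).smulRight x) with hπ₁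
    have hπ₁app : ∀ m, π₁ m = π m - ψ (π m) • x := fun m => rfl
    have hran₁ : ∀ m, π₁ m ∈ N₁ := by
      intro m
      rw [memN₁, hπ₁app]
      refine ⟨sub_mem (hran m) (N.smul_mem _ hxN), ?_⟩
      rw [map_sub, map_smul, smul_eq_mul, hψ, mul_one, sub_self]
    have hid₁ : ∀ y ∈ N₁, π₁ y = y := by
      intro y hy
      rw [memN₁] at hy
      rw [hπ₁app, hid y hy.1, hy.2, zero_smul, sub_zero]
    have hequiv : N ≃ (ZMod d) × N₁ := by
      refine ⟨fun y => (ψ y, ⟨(y : M) - ψ y • x, ?_⟩),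
        fun tz => ⟨tz.1 • x + (tz.2 : M), add_mem (N.smul_mem _ hxN) ((memN₁ _).mp tz.2.2).1⟩,
        ?_, ?_⟩
      · rw [memN₁]
        refine ⟨sub_mem y.2 (N.smul_mem _ hxN), ?_⟩
        rw [map_sub, map_smul, smul_eq_mul, hψ, mul_one, sub_self]
      · intro y
        apply Subtype.ext
        show ψ (y : M) • x + ((y : M) - ψ (y : M) • x) = (y : M)
        abel
      · rintro ⟨t, z⟩
        have hz : ψ (z : M) = 0 := ((memN₁ _).mp z.2).2
        have hval : ψ (t • x + (z : M)) = t := by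
          rw [map_add, map_smul, smul_eq_mul, hψ, mul_one, hz, add_zero]
        refine Prod.ext ?_ ?_
        · exact hval
        · apply Subtype.ext
          show (t • x + (z : M)) - ψ (t • x + (z : M)) • x = (z : M)
          rw [hval, add_sub_cancel_left]
    have hcard₁ : Nat.card N₁ = d ^ s := by
      have h1 : Nat.card N = d * Nat.card N₁ := by
        rw [Nat.card_congr hequiv, Nat.card_prod, Nat.card_zmod]
      rw [h1, pow_succ] at hcard
      exact Nat.eq_of_mul_eq_mul_left (by omega : 0 < d)
        (by rw [hcard]; ring)
    obtain ⟨b₁⟩ := ih N₁ π₁ hran₁ hid₁ hcard₁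
    refine ⟨Module.Basis.mkFinConsOfLE x hxN b₁ inf_le_left ?_ ?_⟩
    · intro c z hz hzero
      have h := congrArg ψ hzero
      rw [map_add, map_smul, smul_eq_mul, hψ, mul_one, map_zero,
        ((memN₁ _).mp hz).2, add_zero] at h
      exact h
    · intro z hz
      refine ⟨-ψ z, (memN₁ _).mpr ⟨add_mem hz (N.smul_mem _ hxN), ?_⟩⟩
      rw [map_add, map_smul, smul_eq_mul, hψ, mul_one]
      ring


lemma card_eq_pow {d : ℕ} [NeZero d] {M : Type} [AddCommGroup M] [Module (ZMod d) M]
    {ι : Type} [Fintype ι] (g : Module.Basis ι (ZMod d) M) :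
    Nat.card M = d ^ (Fintype.card ι) := by
  haveI : Finite (ZMod d) := inferInstance
  rw [Nat.card_congr (g.repr.toEquiv.trans (Finsupp.equivFunOnFinite))]
  simp [Nat.card_fun, Nat.card_zmod]

theorem aux_main (d : ℕ) (hd : 1 < d) (c : ℕ) :
    ∀ (M : Type) [AddCommGroup M] [Module (ZMod d) M] [Finite M] [Module.Free (ZMod d) M],
    Nat.card M ≤ c →
    ∀ (φ : M →ₗ[ZMod d] M →ₗ[ZMod d] ZMod d),
    (∀ m : M, φ m m = 0) →
    (∀ m₀ : M, (∀ m : M, φ m₀ m = 0) → m₀ = 0) →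
    ∀ (L : Submodule (ZMod d) M),
    (∀ x ∈ L, ∀ y ∈ L, φ x y = 0) →
    ∀ (k : ℕ) (b : Module.Basis (Fin k) (ZMod d) L),
    ∃ (n : ℕ) (hkn : k ≤ n) (B : Module.Basis (Fin n ⊕ Fin n) (ZMod d) M),
      (∀ i : Fin k, B (Sum.inl (Fin.castLE hkn i)) = (b i : M)) ∧
      (∀ i j : Fin n, φ (B (Sum.inl i)) (B (Sum.inl j)) = 0) ∧
      (∀ i j : Fin n, φ (B (Sum.inr i)) (B (Sum.inr j)) = 0) ∧
      (∀ i j : Fin n, φ (B (Sum.inl i)) (B (Sum.inr j)) = if i = j then 1 else 0) := by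
  haveI : NeZero d := ⟨by omega⟩
  haveI : Fact (1 < d) := ⟨hd⟩
  induction c with
  | zero =>
    intro M _ _ _ _ hc
    exact absurd (Nat.card_pos.trans_le hc) (lt_irrefl 0)
  | succ c ih =>
    intro M _ _ _ _ hcardle φ halt hsymp L hiso k b
    by_cases hM : Subsingleton M
    · -- trivial module: k must be 0
      have hk0 : k = 0 := by
        by_contra hk
        have : (b ⟨0, Nat.pos_of_ne_zero hk⟩ : L) ≠ 0 := b.ne_zero _
        exact this (Subsingleton.elim _ _)
      subst hk0
      refine ⟨0, le_refl 0, Module.Basis.empty M, fun i => i.elim0, fun i => i.elim0,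
        fun i => i.elim0, fun i => i.elim0⟩
    · haveI : Nontrivial M := not_subsingleton_iff_nontrivial.mp hM
      -- step 1 : choose a "regular" element e
      obtain ⟨e, hte, hbe⟩ : ∃ e : M, (∀ t : ZMod d, t • e = 0 → t = 0) ∧
          ∀ h0 : 0 < k, e = (b ⟨0, h0⟩ : M) := by
        rcases Nat.eq_zero_or_pos k with hk | hk
        · let g₀ := Module.Free.chooseBasis (ZMod d) M
          obtain ⟨i₀⟩ := g₀.index_nonempty
          refine ⟨g₀ i₀, ?_, fun h0 => absurd hk (by omega)⟩
          intro t ht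
          have := congrArg (fun m => g₀.repr m i₀) ht
          simpa using this
        · refine ⟨(b ⟨0, hk⟩ : M), ?_, fun h0 => by congr⟩
          intro t ht
          have hl : t • b ⟨0, hk⟩ = 0 := by
            apply Subtype.ext
            simpa using ht
          have := congrArg (fun z => b.repr z ⟨0, hk⟩) hl
          simpa using this
      obtain ⟨f, hef⟩ := exists_dual φ hsymp e hte
      have hfe : φ f e = -1 := by rw [skew_of_alt φ halt, hef]
      -- step 2 : the orthogonal complement of (e,f)
      set M' : Submodule (ZMod d) M := LinearMap.ker (φ e) ⊓ LinearMap.ker (φ f) with hM'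
      have memM' : ∀ z : M, z ∈ M' ↔ φ e z = 0 ∧ φ f z = 0 := by
        intro z
        rw [hM', Submodule.mem_inf, LinearMap.mem_ker, LinearMap.mem_ker]
      set π : M →ₗ[ZMod d] M :=
        LinearMap.id - ((φ.flip f).smulRight e) + ((φ.flip e).smulRight f) with hπ
      have hπapp : ∀ m, π m = m - (φ m f) • e + (φ m e) • f := fun m => rfl
      have hπmem : ∀ m, π m ∈ M' := by
        intro m
        rw [memM', hπapp]
        have hme : φ m e = - φ e m := skew_of_alt φ halt m e
        have hmf : φ m f = - φ f m := skew_of_alt φ halt m f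
        constructor
        · simp only [map_add, map_sub, map_smul, smul_eq_mul, halt e, hef, mul_zero, mul_one]
          rw [hme]; ring
        · simp only [map_add, map_sub, map_smul, smul_eq_mul, halt f, hfe, mul_zero, mul_one]
          rw [hmf]; ring
      have hπid : ∀ y ∈ M', π y = y := by
        intro y hy
        rw [memM'] at hy
        have h1 : φ y e = 0 := by rw [skew_of_alt φ halt, hy.1, neg_zero]
        have h2 : φ y f = 0 := by rw [skew_of_alt φ halt, hy.2, neg_zero]
        rw [hπapp, h1, h2, zero_smul, zero_smul, sub_zero, add_zero]
      have hπe : π e = 0 := by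
        rw [hπapp, hef, halt e, one_smul, zero_smul, sub_self, zero_add]
      have hπf : π f = 0 := by
        rw [hπapp, halt f, hfe, zero_smul, neg_one_smul, sub_zero]
        abel
      have hdec : ∀ m : M, (φ m f) • e + (φ e m) • f + π m = m := by
        intro m
        rw [hπapp, show φ m e = - φ e m from skew_of_alt φ halt m e, neg_smul]
        abel
      -- the linear equivalence M ≃ (ZMod d)² × M'
      set Fmap : M →ₗ[ZMod d] (ZMod d × ZMod d) × M' :=
        ((φ.flip f).prod (φ e)).prod (π.codRestrict M' hπmem) with hFmap
      set Gmap : ((ZMod d × ZMod d) × M') →ₗ[ZMod d] M :=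
        (((LinearMap.fst (ZMod d) (ZMod d) (ZMod d)).comp
            (LinearMap.fst (ZMod d) (ZMod d × ZMod d) M')).smulRight e) +
        (((LinearMap.snd (ZMod d) (ZMod d) (ZMod d)).comp
            (LinearMap.fst (ZMod d) (ZMod d × ZMod d) M')).smulRight f) +
        (M'.subtype.comp (LinearMap.snd (ZMod d) (ZMod d × ZMod d) M')) with hGmap
      have hGapp : ∀ z : (ZMod d × ZMod d) × M', Gmap z = z.1.1 • e + z.1.2 • f + ↑z.2 :=
        fun z => rfl
      have hFapp : ∀ m : M, Fmap m = ((φ m f, φ e m), ⟨π m, hπmem m⟩) := fun m => rfl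
      have hyf0 : ∀ y : M', φ (y : M) f = 0 := by
        intro y
        rw [skew_of_alt φ halt, (memM' _).mp y.2 |>.2, neg_zero]
      have hye0 : ∀ y : M', φ (y : M) e = 0 := by
        intro y
        rw [skew_of_alt φ halt, (memM' _).mp y.2 |>.1, neg_zero]
      have hFG : Fmap.comp Gmap = LinearMap.id := by
        apply LinearMap.ext
        rintro ⟨⟨a1, a2⟩, y⟩
        rw [LinearMap.comp_apply, LinearMap.id_apply, hGapp, hFapp]
        refine Prod.ext (Prod.ext ?_ ?_) (Subtype.ext ?_)
        · show φ (a1 • e + a2 • f + (y : M)) f = a1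
          simp only [map_add, map_smul, LinearMap.add_apply, LinearMap.smul_apply, smul_eq_mul]
          rw [hef, halt f, hyf0]
          ring
        · show φ e (a1 • e + a2 • f + (y : M)) = a2
          simp only [map_add, map_smul, smul_eq_mul]
          rw [hef, halt e, (memM' _).mp y.2 |>.1]
          ring
        · show π (a1 • e + a2 • f + (y : M)) = (y : M)
          rw [map_add, map_add, map_smul, map_smul, hπe, hπf, hπid _ y.2,
            smul_zero, smul_zero, zero_add, zero_add]
      have hGF : Gmap.comp Fmap = LinearMap.id := by
        apply LinearMap.ext
        intro m
        rw [LinearMap.comp_apply, LinearMap.id_apply, hFapp, hGapp]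
        exact hdec m
      set Φ : M ≃ₗ[ZMod d] ((ZMod d × ZMod d) × M') := LinearEquiv.ofLinear Fmap Gmap hFG hGF
        with hΦ
      have hΦsymm : ∀ z, Φ.symm z = Gmap z := fun z => rfl
      -- cardinality bookkeeping
      haveI : Module.Finite (ZMod d) M := Module.finite_iff_finite (R := ZMod d).mpr inferInstance
      let g₁ := Module.Free.chooseBasis (ZMod d) M
      set r := Fintype.card (Module.Free.ChooseBasisIndex (ZMod d) M) with hrdef
      have hr : Nat.card M = d ^ r := card_eq_pow g₁
      have hM'pos : 0 < Nat.card M' := Nat.card_pos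
      have hcM : Nat.card M = d * d * Nat.card M' := by
        rw [Nat.card_congr Φ.toEquiv, Nat.card_prod, Nat.card_prod, Nat.card_zmod]
      have hr2 : 2 ≤ r := by
        by_contra hlt
        have h1 : d ^ r ≤ d ^ 1 := Nat.pow_le_pow_right (by omega) (by omega)
        have h2 : d * d ≤ d ^ r := by
          calc d * d = d * d * 1 := by ring
          _ ≤ d * d * Nat.card M' := Nat.mul_le_mul_left _ hM'pos
          _ = d ^ r := by rw [← hcM, hr]
        have h3 : d * d ≤ d := by
          calc d * d ≤ d ^ r := h2
          _ ≤ d ^ 1 := h1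
          _ = d := pow_one d
        have h4 : 2 * d ≤ d * d := Nat.mul_le_mul_right d (by omega)
        omega
      have hcM' : Nat.card M' = d ^ (r - 2) := by
        have : d * d * Nat.card M' = d * d * d ^ (r - 2) := by
          rw [← hcM, hr]
          rw [show d * d * d ^ (r - 2) = d ^ (2 + (r - 2)) by rw [pow_add]; ring]
          congr 1
          omega
        exact Nat.eq_of_mul_eq_mul_left (by positivity) this
      obtain ⟨bM'⟩ := basis_of_summand hd g₁ (r - 2) M' π hπmem hπid hcM'
      haveI : Module.Free (ZMod d) M' := Module.Free.of_basis bM'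
      have hcard'le : Nat.card M' ≤ c := by
        have h5 : 1 < d * d := by
          calc 1 < d := hd
          _ = d * 1 := by ring
          _ ≤ d * d := Nat.mul_le_mul_left d (by omega)
        have h6 : Nat.card M' < Nat.card M := by
          calc Nat.card M' = 1 * Nat.card M' := (one_mul _).symm
          _ < (d * d) * Nat.card M' := (Nat.mul_lt_mul_right hM'pos).mpr h5
          _ = Nat.card M := hcM.symm
        omega
      -- the restricted form on M'
      set φ' : M' →ₗ[ZMod d] M' →ₗ[ZMod d] ZMod d :=
        (φ.domRestrict M').compl₂ M'.subtype with hφ'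
      have hφ'app : ∀ x y : M', φ' x y = φ (x : M) (y : M) := fun x y => rfl
      have halt' : ∀ z : M', φ' z z = 0 := fun z => halt (z : M)
      have hsymp' : ∀ z : M', (∀ y : M', φ' z y = 0) → z = 0 := by
        intro z hz
        have hze : φ (z : M) e = 0 := hye0 z
        have hzf : φ (z : M) f = 0 := hyf0 z
        have : (z : M) = 0 := by
          apply hsymp
          intro m
          conv_lhs => rw [← hdec m]
          rw [map_add, map_add, map_smul, map_smul, smul_eq_mul, smul_eq_mul,
            hze, hzf, mul_zero, mul_zero, zero_add, zero_add]
          exact hz ⟨π m, hπmem m⟩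
        exact Subtype.ext this
      -- the isotropic submodule L'' of M' spanned by the corrected basis vectors
      set succ' : Fin (k - 1) → Fin k := fun i => ⟨(i : ℕ) + 1, by have := i.isLt; omega⟩
        with hsucc'
      set vL : Fin (k - 1) → L := fun i =>
        b (succ' i) + (φ f ((b (succ' i) : M))) • b ⟨0, by have := i.isLt; omega⟩ with hvL
      have hvmem : ∀ i : Fin (k - 1), ((vL i : M)) ∈ M' := by
        intro i
        have hk0 : 0 < k := by have := i.isLt; omega
        have he0 : e = (b ⟨0, hk0⟩ : M) := hbe hk0
        have hcoe : ((vL i : M)) = (b (succ' i) : M) + (φ f ((b (succ' i) : M))) • e := by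
          rw [hvL]
          push_cast
          rw [he0]
        rw [memM', hcoe]
        have h0L : ((b ⟨0, hk0⟩ : L) : M) ∈ L := (b ⟨0, hk0⟩).2
        have hsL : ((b (succ' i) : L) : M) ∈ L := (b (succ' i)).2
        constructor
        · rw [map_add, map_smul, smul_eq_mul, he0, hiso _ h0L _ hsL, halt, mul_zero, add_zero]
        · rw [map_add, map_smul, smul_eq_mul, hfe]
          ring
      set v : Fin (k - 1) → M' := fun i => ⟨(vL i : M), hvmem i⟩ with hv
      have hlivL : LinearIndependent (ZMod d) vL := by
        rw [Fintype.linearIndependent_iff]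
        intro t ht i₀
        have hk0 : 0 < k := by have := i₀.isLt; omega
        have hrepr := congrArg (fun z => b.repr z (succ' i₀)) ht
        simp only [map_sum, map_zero, Finsupp.coe_zero, Pi.zero_apply, Finsupp.finset_sum_apply]
          at hrepr
        have hco : ∀ i : Fin (k - 1),
            (b.repr (t i • vL i)) (succ' i₀) = if i = i₀ then t i else 0 := by
          intro i
          rw [map_smul, hvL]
          simp only [map_add, map_smul, Module.Basis.repr_self]
          rw [Finsupp.smul_apply, Finsupp.add_apply, Finsupp.smul_apply,
            Finsupp.single_apply, Finsupp.single_apply]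
          have h0 : ¬ ((⟨0, by have := i.isLt; omega⟩ : Fin k) = succ' i₀) := by
            rw [hsucc', Fin.ext_iff]
            simp
          have h1 : (succ' i = succ' i₀) ↔ i = i₀ := by
            rw [hsucc', Fin.ext_iff, Fin.ext_iff]
            simp
          rw [if_neg h0, smul_zero, add_zero]
          by_cases h : i = i₀
          · rw [if_pos (h1.mpr h), if_pos h]
            simp
          · rw [if_neg (fun hh => h (h1.mp hh)), if_neg h]
            simp
        rw [Finset.sum_congr rfl (fun i _ => hco i)] at hrepr
        simpa using hrepr
      have hliv : LinearIndependent (ZMod d) v := by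
        apply LinearIndependent.of_comp M'.subtype
        have heq : (M'.subtype ∘ v) = fun i => ((vL i : M)) := rfl
        rw [heq]
        exact hlivL.map' L.subtype (Submodule.ker_subtype L)
      set L'' : Submodule (ZMod d) M' := Submodule.span (ZMod d) (Set.range v) with hL''
      set b'' : Module.Basis (Fin (k - 1)) (ZMod d) L'' := Module.Basis.span hliv with hb''
      have hiso'' : ∀ x ∈ L'', ∀ y ∈ L'', φ' x y = 0 := by
        intro x hx y hy
        refine Submodule.span_induction₂
          (p := fun x y _ _ => φ' x y = 0) ?_ ?_ ?_ ?_ ?_ ?_ ?_ hx hy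
        · rintro x' y' ⟨i, rfl⟩ ⟨j, rfl⟩
          rw [hφ'app]
          show φ ((vL i : M)) ((vL j : M)) = 0
          exact hiso _ (vL i).2 _ (vL j).2
        · intro y' _; simp
        · intro x' _; simp
        · intro x' y' z' _ _ _ h1 h2; rw [map_add, LinearMap.add_apply, h1, h2, add_zero]
        · intro x' y' z' _ _ _ h1 h2; rw [map_add, h1, h2, add_zero]
        · intro r x' y' _ _ h1; rw [map_smul, LinearMap.smul_apply, h1, smul_zero]
        · intro r x' y' _ _ h1; rw [map_smul, h1, smul_zero]
      obtain ⟨n', hk'n', B', hB'1, hB'2, hB'3, hB'4⟩ :=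
        ih M' hcard'le φ' halt' hsymp' L'' hiso'' (k - 1) b''
      -- φ-facts about elements of M'
      have hMe : ∀ z : M', φ e (z : M) = 0 := fun z => ((memM' _).mp z.2).1
      have hMf : ∀ z : M', φ f (z : M) = 0 := fun z => ((memM' _).mp z.2).2
      have hEE : ∀ i j, φ (B' (Sum.inl i) : M) (B' (Sum.inl j) : M) = 0 := by
        intro i j; rw [← hφ'app]; exact hB'2 i j
      have hFF : ∀ i j, φ (B' (Sum.inr i) : M) (B' (Sum.inr j) : M) = 0 := by
        intro i j; rw [← hφ'app]; exact hB'3 i j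
      have hEF : ∀ i j, φ (B' (Sum.inl i) : M) (B' (Sum.inr j) : M) = if i = j then 1 else 0 := by
        intro i j; rw [← hφ'app]; exact hB'4 i j
      -- building a basis of M adapted to the decomposition
      set bPair : Module.Basis (Unit ⊕ Unit) (ZMod d) (ZMod d × ZMod d) :=
        (Module.Basis.singleton Unit (ZMod d)).prod (Module.Basis.singleton Unit (ZMod d)) with hbPair
      set bBig : Module.Basis ((Unit ⊕ Unit) ⊕ (Fin n' ⊕ Fin n')) (ZMod d) ((ZMod d × ZMod d) × M') :=
        bPair.prod B' with hbBig
      set σ : ((Unit ⊕ Unit) ⊕ (Fin n' ⊕ Fin n')) ≃ (Fin (n' + 1) ⊕ Fin (n' + 1)) :=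
        { toFun := Sum.elim (Sum.elim (fun _ => Sum.inl 0) (fun _ => Sum.inr 0))
            (Sum.elim (fun j => Sum.inl j.succ) (fun j => Sum.inr j.succ)),
          invFun := Sum.elim
            (fun i => Fin.cases (Sum.inl (Sum.inl ())) (fun j => Sum.inr (Sum.inl j)) i)
            (fun i => Fin.cases (Sum.inl (Sum.inr ())) (fun j => Sum.inr (Sum.inr j)) i),
          left_inv := by rintro ((u | u) | (j | j)) <;> simp,
          right_inv := by
            rintro (i | i) <;> exact Fin.cases (by simp) (fun j => by simp) i } with hσdef
      set B₀ : Module.Basis (Fin (n' + 1) ⊕ Fin (n' + 1)) (ZMod d) M := (bBig.map Φ.symm).reindex σ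
        with hB₀def
      have hσa : σ.symm (Sum.inl (0 : Fin (n' + 1))) = Sum.inl (Sum.inl ()) := rfl
      have hσb : ∀ j : Fin n', σ.symm (Sum.inl j.succ) = Sum.inr (Sum.inl j) := by
        intro j
        apply σ.injective
        rw [Equiv.apply_symm_apply]
        rfl
      have hσc : σ.symm (Sum.inr (0 : Fin (n' + 1))) = Sum.inl (Sum.inr ()) := rfl
      have hσd : ∀ j : Fin n', σ.symm (Sum.inr j.succ) = Sum.inr (Sum.inr j) := by
        intro j
        apply σ.injective
        rw [Equiv.apply_symm_apply]
        rfl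
      have hB₀a : B₀ (Sum.inl 0) = e := by
        rw [hB₀def, Module.Basis.reindex_apply, hσa, Module.Basis.map_apply, hΦsymm, hGapp]
        rw [hbBig, Module.Basis.prod_apply_inl_fst, Module.Basis.prod_apply_inl_snd, hbPair,
          Module.Basis.prod_apply_inl_fst, Module.Basis.prod_apply_inl_snd, Module.Basis.singleton_apply]
        simp
      have hB₀b : ∀ j : Fin n', B₀ (Sum.inl j.succ) = (B' (Sum.inl j) : M) := by
        intro j
        rw [hB₀def, Module.Basis.reindex_apply, hσb, Module.Basis.map_apply, hΦsymm, hGapp]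
        rw [hbBig, Module.Basis.prod_apply_inr_fst, Module.Basis.prod_apply_inr_snd]
        simp
      have hB₀c : B₀ (Sum.inr 0) = f := by
        rw [hB₀def, Module.Basis.reindex_apply, hσc, Module.Basis.map_apply, hΦsymm, hGapp]
        rw [hbBig, Module.Basis.prod_apply_inl_fst, Module.Basis.prod_apply_inl_snd, hbPair,
          Module.Basis.prod_apply_inr_fst, Module.Basis.prod_apply_inr_snd, Module.Basis.singleton_apply]
        simp
      have hB₀d : ∀ j : Fin n', B₀ (Sum.inr j.succ) = (B' (Sum.inr j) : M) := by
        intro j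
        rw [hB₀def, Module.Basis.reindex_apply, hσd, Module.Basis.map_apply, hΦsymm, hGapp]
        rw [hbBig, Module.Basis.prod_apply_inr_fst, Module.Basis.prod_apply_inr_snd]
        simp
      -- the correction coefficients
      set γ : Fin n' → ZMod d :=
        fun j => if h : (j : ℕ) + 1 < k then φ f ((b ⟨(j : ℕ) + 1, h⟩ : M)) else 0 with hγ
      set w : (Fin (n' + 1) ⊕ Fin (n' + 1)) → M := Sum.elim
        (fun i => Fin.cases e (fun j => (B' (Sum.inl j) : M) - γ j • e) i)
        (fun i => Fin.cases (f + ∑ j : Fin n', γ j • (B' (Sum.inr j) : M))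
          (fun j => (B' (Sum.inr j) : M)) i) with hwdef
      set w' : (Fin (n' + 1) ⊕ Fin (n' + 1)) → M := Sum.elim
        (fun i => Fin.cases e (fun j => (B' (Sum.inl j) : M) + γ j • e) i)
        (fun i => Fin.cases (f - ∑ j : Fin n', γ j • (B' (Sum.inr j) : M))
          (fun j => (B' (Sum.inr j) : M)) i) with hw'def
      have hwa : w (Sum.inl 0) = e := by rw [hwdef]; simp
      have hwb : ∀ j : Fin n', w (Sum.inl j.succ) = (B' (Sum.inl j) : M) - γ j • e := by
        intro j; rw [hwdef]; simp
      have hwc : w (Sum.inr 0) = f + ∑ j : Fin n', γ j • (B' (Sum.inr j) : M) := by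
        rw [hwdef]; simp
      have hwd : ∀ j : Fin n', w (Sum.inr j.succ) = (B' (Sum.inr j) : M) := by
        intro j; rw [hwdef]; simp
      have hw'a : w' (Sum.inl 0) = e := by rw [hw'def]; simp
      have hw'b : ∀ j : Fin n', w' (Sum.inl j.succ) = (B' (Sum.inl j) : M) + γ j • e := by
        intro j; rw [hw'def]; simp
      have hw'c : w' (Sum.inr 0) = f - ∑ j : Fin n', γ j • (B' (Sum.inr j) : M) := by
        rw [hw'def]; simp
      have hw'd : ∀ j : Fin n', w' (Sum.inr j.succ) = (B' (Sum.inr j) : M) := by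
        intro j; rw [hw'def]; simp
      set T : M →ₗ[ZMod d] M := B₀.constr ℕ w with hTdef
      set S : M →ₗ[ZMod d] M := B₀.constr ℕ w' with hSdef
      have hT : ∀ i, T (B₀ i) = w i := fun i => B₀.constr_basis ℕ w i
      have hS : ∀ i, S (B₀ i) = w' i := fun i => B₀.constr_basis ℕ w' i
      have hTS : T.comp S = LinearMap.id := by
        apply B₀.ext
        rintro (i | i) <;> refine Fin.cases ?_ (fun j => ?_) i <;>
          rw [LinearMap.comp_apply, LinearMap.id_apply]
        · rw [hS, hw'a, ← hB₀a, hT, hwa, hB₀a]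
        · rw [hS, hw'b, map_add, map_smul, ← hB₀b, ← hB₀a, hT, hT, hwb, hwa, hB₀b]
          abel
        · rw [hS, hw'c, show (∑ j : Fin n', γ j • (B' (Sum.inr j) : M)) =
              ∑ j : Fin n', γ j • B₀ (Sum.inr j.succ) from
              Finset.sum_congr rfl (fun j _ => by rw [hB₀d]),
            map_sub, map_sum, ← hB₀c, hT]
          rw [hwc, Finset.sum_congr rfl
            (fun (j : Fin n') (_ : j ∈ Finset.univ) => by rw [map_smul, hT, hwd] :
              ∀ j ∈ Finset.univ, T (γ j • B₀ (Sum.inr j.succ)) = γ j • (B' (Sum.inr j) : M)),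
            hB₀c]
          abel
        · rw [hS, hw'd, ← hB₀d, hT, hwd, hB₀d]
      have hST : S.comp T = LinearMap.id := by
        apply B₀.ext
        rintro (i | i) <;> refine Fin.cases ?_ (fun j => ?_) i <;>
          rw [LinearMap.comp_apply, LinearMap.id_apply]
        · rw [hT, hwa, ← hB₀a, hS, hw'a, hB₀a]
        · rw [hT, hwb, map_sub, map_smul, ← hB₀b, ← hB₀a, hS, hS, hw'b, hw'a, hB₀b]
          abel
        · rw [hT, hwc, show (∑ j : Fin n', γ j • (B' (Sum.inr j) : M)) =
              ∑ j : Fin n', γ j • B₀ (Sum.inr j.succ) from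
              Finset.sum_congr rfl (fun j _ => by rw [hB₀d]),
            map_add, map_sum, ← hB₀c, hS]
          rw [hw'c, Finset.sum_congr rfl
            (fun (j : Fin n') (_ : j ∈ Finset.univ) => by rw [map_smul, hS, hw'd] :
              ∀ j ∈ Finset.univ, S (γ j • B₀ (Sum.inr j.succ)) = γ j • (B' (Sum.inr j) : M)),
            hB₀c]
          abel
        · rw [hT, hwd, ← hB₀d, hS, hw'd, hB₀d]
      set Teq : M ≃ₗ[ZMod d] M := LinearEquiv.ofLinear T S hTS hST with hTeq
      set B : Module.Basis (Fin (n' + 1) ⊕ Fin (n' + 1)) (ZMod d) M := B₀.map Teq with hB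
      have hBval : ∀ i, B i = w i := by
        intro i
        rw [hB, Module.Basis.map_apply]
        exact hT i
      have hkn : k ≤ n' + 1 := by omega
      have hvLcoe : ∀ i : Fin (k - 1), ((vL i : L) : M) =
          (b (succ' i) : M) + (φ f ((b (succ' i) : M))) • e := by
        intro i
        have hk0 : 0 < k := by have := i.isLt; omega
        rw [hvL]
        push_cast
        rw [← hbe hk0]
      refine ⟨n' + 1, hkn, B, ?_, ?_, ?_, ?_⟩
      · -- extension of b
        rintro ⟨iv, hi⟩
        rw [hBval]
        cases iv with
        | zero =>
          have hc0 : Fin.castLE hkn (⟨0, hi⟩ : Fin k) = (0 : Fin (n' + 1)) := rfl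
          rw [hc0, hwa]
          exact hbe hi
        | succ iv =>
          have hlt : iv < n' := by omega
          have hltk1 : iv < k - 1 := by omega
          have hc1 : Fin.castLE hkn (⟨iv + 1, hi⟩ : Fin k) = Fin.succ ⟨iv, hlt⟩ := rfl
          rw [hc1, hwb]
          have hj : (⟨iv, hlt⟩ : Fin n') = Fin.castLE hk'n' ⟨iv, hltk1⟩ := rfl
          rw [hj, hB'1, hb'', Module.Basis.span_apply]
          have hvv : ((v ⟨iv, hltk1⟩ : M') : M) = ((vL ⟨iv, hltk1⟩ : L) : M) := rfl
          rw [hvv, hvLcoe]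
          have hsucceq : succ' (⟨iv, hltk1⟩ : Fin (k - 1)) = (⟨iv + 1, hi⟩ : Fin k) := rfl
          rw [hsucceq]
          have hγval : γ (Fin.castLE hk'n' ⟨iv, hltk1⟩) = φ f ((b ⟨iv + 1, hi⟩ : M)) := by
            rw [hγ]
            exact dif_pos hi
          rw [hγval]
          abel
      · -- e-e orthogonality
        intro i j
        rw [hBval, hBval]
        refine Fin.cases ?_ (fun i' => ?_) i <;> refine Fin.cases ?_ (fun j' => ?_) j
        · rw [hwa]; exact halt e
        · rw [hwa, hwb]
          simp only [map_sub, map_smul, smul_eq_mul, hMe, halt, mul_zero, sub_zero]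
        · rw [hwa, hwb]
          simp only [map_sub, map_smul, LinearMap.sub_apply, LinearMap.smul_apply,
            smul_eq_mul, hye0, halt, mul_zero, sub_zero]
        · rw [hwb, hwb]
          simp only [map_sub, map_smul, LinearMap.sub_apply, LinearMap.smul_apply,
            smul_eq_mul, hye0, hMe, halt, hEE, mul_zero, sub_zero, sub_self]
      · -- f-f orthogonality
        intro i j
        rw [hBval, hBval]
        refine Fin.cases ?_ (fun i' => ?_) i <;> refine Fin.cases ?_ (fun j' => ?_) j
        · exact halt _
        · rw [hwc, hwd]
          simp only [map_add, map_sum, map_smul, LinearMap.add_apply, LinearMap.sum_apply,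
            LinearMap.smul_apply, smul_eq_mul, hMf, hFF, mul_zero, add_zero,
            Finset.sum_const_zero]
        · rw [hwc, hwd]
          simp only [map_add, map_sum, map_smul, smul_eq_mul, hyf0, hFF, mul_zero, add_zero,
            Finset.sum_const_zero, zero_add]
        · rw [hwd, hwd]
          exact hFF i' j'
      · -- e-f pairing
        intro i j
        rw [hBval, hBval]
        refine Fin.cases ?_ (fun i' => ?_) i <;> refine Fin.cases ?_ (fun j' => ?_) j
        · rw [hwa, hwc, if_pos rfl]
          simp only [map_add, map_sum, map_smul, smul_eq_mul, hef, hMe, mul_zero,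
            Finset.sum_const_zero, add_zero]
        · rw [hwa, hwd, if_neg (Ne.symm (Fin.succ_ne_zero j'))]
          exact hMe _
        · rw [hwb, hwc, if_neg (Fin.succ_ne_zero i')]
          simp only [map_add, map_sub, map_sum, map_smul, LinearMap.sub_apply,
            LinearMap.add_apply, LinearMap.sum_apply, LinearMap.smul_apply, smul_eq_mul,
            hyf0, hMe, hef, hEF, mul_ite, mul_one, mul_zero, Finset.sum_ite_eq,
            Finset.mem_univ, if_true, zero_add, add_zero, mul_one]
          simp [mul_ite, mul_one, mul_zero, sub_zero, Finset.sum_ite_eq]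
        · rw [hwb, hwd]
          simp only [map_sub, LinearMap.sub_apply, map_smul, LinearMap.smul_apply,
            smul_eq_mul, hEF, hMe, mul_zero, sub_zero, Fin.succ_inj]

end SymplecticHelpers

/-- Let `M` be a finite free `ℤ_d`-module with a symplectic form `φ`,
and let `L ⊆ M` be a free isotropic submodule.  Then every `ℤ_d`-basis `(e₁,…,e_k)` of
`L` can be extended to a symplectic basis `(e₁,…,e_n,f₁,…,f_n)` of `M`. -/
theorem free_isotropic_basis_extends_to_symplectic_basis
    (d : ℕ) [NeZero d]
    (M : Type) [AddCommGroup M] [Module (ZMod d) M] [Finite M] [Module.Free (ZMod d) M]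
    (φ : M →ₗ[ZMod d] M →ₗ[ZMod d] ZMod d)
    (halt : ∀ m : M, φ m m = 0)
    (hsymp : ∀ m₀ : M, (∀ m : M, φ m₀ m = 0) → m₀ = 0)
    (L : Submodule (ZMod d) M)
    (hiso : ∀ x ∈ L, ∀ y ∈ L, φ x y = 0)
    (k : ℕ) (b : Module.Basis (Fin k) (ZMod d) L) :
    ∃ (n : ℕ) (hkn : k ≤ n) (B : Module.Basis (Fin n ⊕ Fin n) (ZMod d) M),
      (∀ i : Fin k, B (Sum.inl (Fin.castLE hkn i)) = (b i : M)) ∧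
      (∀ i j : Fin n, φ (B (Sum.inl i)) (B (Sum.inl j)) = 0) ∧
      (∀ i j : Fin n, φ (B (Sum.inr i)) (B (Sum.inr j)) = 0) ∧
      (∀ i j : Fin n, φ (B (Sum.inl i)) (B (Sum.inr j)) = if i = j then 1 else 0) := by
  rcases eq_or_lt_of_le (Nat.one_le_iff_ne_zero.mpr (NeZero.ne d)) with hd1 | hd
  · -- the degenerate case `d = 1` : everything is trivial
    subst hd1
    haveI : Subsingleton (ZMod 1) := inferInstance
    haveI : Subsingleton M := Module.subsingleton (ZMod 1) M
    haveI : Subsingleton ((Fin k ⊕ Fin k) →₀ ZMod 1) := inferInstance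
    refine ⟨k, le_refl k,
      Module.Basis.ofRepr (LinearEquiv.ofLinear 0 0
        (LinearMap.ext fun x => Subsingleton.elim _ _)
        (LinearMap.ext fun x => Subsingleton.elim _ _)),
      fun i => Subsingleton.elim _ _,
      fun i j => Subsingleton.elim _ _,
      fun i j => Subsingleton.elim _ _,
      fun i j => Subsingleton.elim _ _⟩
  · exact aux_main d hd (Nat.card M) M (le_refl _) φ halt hsymp L hiso k b
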